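/- arXiv:2511.23343 — 3 statements merged into one kernel-verified Lean document; each statement's English description precedes it below -/
import Mathlib

section
/- Let ε > 0, let G ⊆ ℂ be open, and let h : 𝔻 → G be a bijective holomorphic map with h(0) = 0 such that |h(w) − w| ≤ 2ε log(1/(1−|w|)) for every w ∈ 𝔻 with |w| ≥ 1 − e^{−2}. Then for every r ∈ [1 − e^{−2}, 1), one has B(0, r − 2ε log(1/(1−r))) ⊆ h(B(0,r)) ⊆ B(0, r + 2ε log(1/(1−r))). -/
open Metric

/-- The intermediate inclusion in the proof of Lemma 2.8: if the conformal bijection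
`h : 𝔻 → G` with `h(0) = 0` displaces points near the unit circle by at most
`2ε log(1/(1−|w|))`, then the image of each disk `B(0,r)` with `1 − e⁻² ≤ r < 1` is
trapped between the disks of radii `r ∓ 2ε log(1/(1−r))`. -/
theorem image_of_circle_trapped_between_circles
    (ε : ℝ) (hε : 0 < ε)
    (G : Set ℂ) (hG : IsOpen G)
    (h : ℂ → ℂ)
    (hdiff : DifferentiableOn ℂ h (ball (0 : ℂ) 1))
    (hinj : Set.InjOn h (ball (0 : ℂ) 1))
    (him : h '' ball (0 : ℂ) 1 = G)
    (h0 : h 0 = 0)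
    (hdisp : ∀ w ∈ ball (0 : ℂ) 1, 1 - Real.exp (-2) ≤ ‖w‖ →
      ‖h w - w‖ ≤ 2 * ε * Real.log (1 / (1 - ‖w‖))) :
    ∀ r : ℝ, 1 - Real.exp (-2) ≤ r → r < 1 →
      ball (0 : ℂ) (r - 2 * ε * Real.log (1 / (1 - r))) ⊆ h '' ball (0 : ℂ) r ∧
      h '' ball (0 : ℂ) r ⊆ ball (0 : ℂ) (r + 2 * ε * Real.log (1 / (1 - r))) := by
  intro r hr1 hr2
  have hexp : Real.exp (-2) < 1 := Real.exp_lt_one_iff.mpr (by norm_num)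
  have hexp0 : 0 < Real.exp (-2) := Real.exp_pos _
  set ρ : ℝ := 1 - Real.exp (-2) with hρdef
  clear_value ρ
  have hρ0 : 0 < ρ := by simp only [hρdef]; linarith
  have hρ1 : ρ < 1 := by simp only [hρdef]; linarith
  have hr0 : 0 < r := lt_of_lt_of_le hρ0 hr1
  have hsub : 0 < 1 - r := by linarith
  -- monotonicity of the log term
  have hlogmono : ∀ s : ℝ, s ≤ r → Real.log (1 / (1 - s)) ≤ Real.log (1 / (1 - r)) := by
    intro s hs
    apply Real.log_le_log (one_div_pos.mpr (by linarith))
    apply one_div_le_one_div_of_le hsub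
    linarith
  have hlognn : ∀ s : ℝ, 0 ≤ s → s < 1 → 0 ≤ Real.log (1 / (1 - s)) := by
    intro s hs0 hs
    apply Real.log_nonneg
    rw [le_div_iff₀ (by linarith : (0:ℝ) < 1 - s)]
    linarith
  set δ : ℝ := 2 * ε * Real.log (1 / (1 - r)) with hδdef
  clear_value δ
  have hδ0 : 0 ≤ δ := by
    rw [hδdef]
    have := hlognn r hr0.le hr2
    positivity
  -- The key pointwise bound for the right inclusion
  have key : ∀ w ∈ ball (0 : ℂ) r, ‖h w‖ < r + δ := by
    intro w hw
    rw [mem_ball_zero_iff] at hw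
    have hw1 : w ∈ ball (0 : ℂ) 1 := by
      rw [mem_ball_zero_iff]; linarith
    rcases le_or_gt ρ (‖w‖) with hcase | hcase
    · -- |w| ≥ 1 - e⁻² : direct displacement bound
      have h1 := hdisp w hw1 hcase
      have h2 : ‖h w‖ ≤ ‖w‖ + ‖h w - w‖ := by
        calc ‖h w‖ = ‖w + (h w - w)‖ := by ring_nf
        _ ≤ ‖w‖ + ‖h w - w‖ := norm_add_le _ _
      have h3 := hlogmono (‖w‖) hw.le
      calc ‖h w‖ ≤ ‖w‖ + 2 * ε * Real.log (1 / (1 - ‖w‖)) := by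
            linarith
      _ < r + δ := by nlinarith
    · -- |w| < ρ : maximum modulus + Schwarz lemma
      set M : ℝ := ρ + 2 * ε * Real.log (1 / (1 - ρ)) with hMdef
      clear_value M
      have hMpos : 0 < M := by
        rw [hMdef]
        have := hlognn ρ hρ0.le hρ1
        positivity
      have hMr : M ≤ r + δ := by
        have := hlogmono ρ hr1
        simp only [hMdef, hδdef]
        nlinarith
      -- the maximum modulus bound on the closed ball of radius ρ
      have hdcc : DiffContOnCl ℂ h (ball (0 : ℂ) ρ) := by
        apply DifferentiableOn.diffContOnCl
        apply hdiff.mono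
        rw [closure_ball (0 : ℂ) hρ0.ne']
        exact closedBall_subset_ball hρ1
      have hbound : ∀ z ∈ closure (ball (0 : ℂ) ρ), ‖h z‖ ≤ M := by
        intro z hz
        apply Complex.norm_le_of_forall_mem_frontier_norm_le isBounded_ball hdcc _ hz
        intro y hy
        rw [frontier_ball (0 : ℂ) hρ0.ne'] at hy
        have hyabs : ‖y‖ = ρ := by
          simpa using hy
        have hy1 : y ∈ ball (0 : ℂ) 1 := by
          rw [mem_ball_zero_iff, hyabs]; exact hρ1
        have h1 := hdisp y hy1 (le_of_eq hyabs.symm)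
        rw [hyabs] at h1
        have h2 : ‖h y‖ ≤ ‖y‖ + ‖h y - y‖ := by
          calc ‖h y‖ = ‖y + (h y - y)‖ := by ring_nf
          _ ≤ ‖y‖ + ‖h y - y‖ := norm_add_le _ _
        rw [hyabs] at h2
        simp only [hMdef]
        linarith
      rcases eq_or_ne w 0 with rfl | hw0
      · rw [h0]; simp only [norm_zero]; nlinarith
      have hwpos : 0 < ‖w‖ := norm_pos_iff.mpr hw0
      set η : ℝ := M * (ρ - ‖w‖) / (2 * ‖w‖) with hηdef
      clear_value η
      have hη0 : 0 < η := by
        rw [hηdef]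
        apply div_pos (by nlinarith) (by positivity)
      have hmaps : Set.MapsTo h (ball (0 : ℂ) ρ) (ball (h 0) (M + η)) := by
        intro z hz
        rw [mem_ball, h0, dist_eq_norm, sub_zero]
        have := hbound z (subset_closure hz)
        linarith
      have hdball : DifferentiableOn ℂ h (ball (0 : ℂ) ρ) :=
        hdiff.mono (ball_subset_ball hρ1.le)
      have hwρ : w ∈ ball (0 : ℂ) ρ := by
        rw [mem_ball_zero_iff]; exact hcase
      have hs := Complex.dist_le_div_mul_dist_of_mapsTo_ball hdball
        (hmaps.mono_right ball_subset_closedBall) hwρ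
      rw [h0, dist_eq_norm, sub_zero, dist_eq_norm, sub_zero] at hs
      have hηw : η * ‖w‖ = M * (ρ - ‖w‖) / 2 := by
        rw [hηdef]; field_simp
      have hlt : (M + η) / ρ * ‖w‖ < M := by
        rw [div_mul_eq_mul_div, div_lt_iff₀ hρ0]
        nlinarith [hηw, mul_lt_mul_of_pos_left hcase hMpos]
        
      linarith
  refine ⟨?_, ?_⟩
  · -- left inclusion
    rcases le_or_gt (r - δ) 0 with hrδ | hrδ
    · rw [ball_eq_empty.mpr hrδ]; exact Set.empty_subset _
    set U : Set ℂ := h '' ball (0 : ℂ) r with hUdef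
    have hopenU : IsOpen U := by
      have hana : AnalyticOnNhd ℂ h (ball (0 : ℂ) 1) :=
        hdiff.analyticOnNhd isOpen_ball
      rcases hana.is_constant_or_isOpen (convex_ball (0 : ℂ) 1).isPreconnected with
        ⟨c, hc⟩ | hopen
      · exfalso
        have h1 : (0 : ℂ) ∈ ball (0 : ℂ) 1 := mem_ball_self one_pos
        have h2 : (1/2 : ℂ) ∈ ball (0 : ℂ) 1 := by
          rw [mem_ball_zero_iff]; norm_num
        have := hinj h1 h2 (by rw [hc 0 h1, hc (1/2) h2])
        norm_num at this
      · exact hopen _ (ball_subset_ball hr2.le) isOpen_ball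
    have hcompact : IsCompact (h '' closedBall (0 : ℂ) r) :=
      (isCompact_closedBall (0 : ℂ) r).image_of_continuousOn
        (hdiff.continuousOn.mono (closedBall_subset_ball hr2))
    have hclosU : closure U ⊆ h '' closedBall (0 : ℂ) r :=
      closure_minimal (Set.image_mono ball_subset_closedBall) hcompact.isClosed
    have hcl : ball (0 : ℂ) (r - δ) ∩ closure U ⊆ U := by
      rintro z ⟨hz1, hz2⟩
      obtain ⟨w, hw, rfl⟩ := hclosU hz2
      rw [mem_closedBall_zero_iff] at hw
      have hw1 : w ∈ ball (0 : ℂ) 1 := by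
        rw [mem_ball_zero_iff]; linarith
      rcases lt_or_eq_of_le hw with hwlt | hweq
      · exact ⟨w, by rw [mem_ball_zero_iff]; exact hwlt, rfl⟩
      · exfalso
        have hd := hdisp w hw1 (by rw [hweq]; exact hr1)
        rw [hweq] at hd
        have h2 : ‖w‖ - ‖h w‖ ≤ ‖h w - w‖ := by
          have := norm_sub_norm_le w (h w)
          rw [norm_sub_rev] at this
          simpa using this
        rw [mem_ball_zero_iff] at hz1
        rw [hweq] at h2
        simp only [hδdef] at hz1
        linarith
    apply IsPreconnected.subset_left_of_subset_union hopenU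
      (isOpen_compl_iff.mpr isClosed_closure)
      (disjoint_compl_right.mono_left subset_closure)
    · intro z hz
      by_cases hzc : z ∈ closure U
      · exact Or.inl (hcl ⟨hz, hzc⟩)
      · exact Or.inr hzc
    · exact ⟨0, mem_ball_self hrδ, ⟨0, mem_ball_self hr0, h0⟩⟩
    · exact (convex_ball (0 : ℂ) (r - δ)).isPreconnected
  · -- right inclusion
    rintro z ⟨w, hw, rfl⟩
    rw [mem_ball_zero_iff]
    exact key w hw
end

section
/- For every α ∈ (0,1) there exists τ* > 0 with the following property: whenever (τ_k)_{k≥1} is a monotone increasing sequence of reals with τ₁ ≥ τ* that satisfies τ_{k+1}^{11} ≤ exp(τ_k^{α/7}) for all k ≥ 1 (condition C1) and log log(τ_k) ≤ (1/2) log log(τ_{k+1}) for all k ≥ 1 (condition C2), one has, for every k ≥ 1, (3^k/τ_k) · log²(τ_k) < 1/ log log(τ_{k+1}). -/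
/-- **Proposition 4.1(b).** For every `α ∈ (0,1)` there is `τ* > 0` such that every
monotone increasing sequence `(τ_k)_{k≥1}` with `τ₁ ≥ τ*` satisfying
(C1) `τ_{k+1}^{11} ≤ exp(τ_k^{α/7})` and (C2) `log log τ_k ≤ (1/2) log log τ_{k+1}`
for all `k ≥ 1`, also satisfies `(3^k/τ_k)·log²(τ_k) < 1/log log(τ_{k+1})` for all
`k ≥ 1`. -/
theorem three_pow_over_tau_lt_rho
    (α : ℝ) (hα : α ∈ Set.Ioo (0 : ℝ) 1) :
    ∃ τstar : ℝ, 0 < τstar ∧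
      ∀ τ : ℕ → ℝ, (∀ k, 1 ≤ k → τ k ≤ τ (k + 1)) → τstar ≤ τ 1 →
        (∀ k, 1 ≤ k → (τ (k + 1)) ^ (11 : ℕ) ≤ Real.exp ((τ k) ^ (α / 7))) →
        (∀ k, 1 ≤ k →
          Real.log (Real.log (τ k)) ≤ (1 / 2) * Real.log (Real.log (τ (k + 1)))) →
        ∀ k, 1 ≤ k →
          ((3 : ℝ) ^ k / τ k) * (Real.log (τ k)) ^ 2 <
            1 / Real.log (Real.log (τ (k + 1))) := by
  obtain ⟨hα0, hα1⟩ := hα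
  refine ⟨Real.exp (Real.exp 10), Real.exp_pos _, ?_⟩
  intro τ hmono hτ1 hC1 hC2 k hk
  -- every term is at least τ*
  have hτge : ∀ m, 1 ≤ m → Real.exp (Real.exp 10) ≤ τ m := by
    intro m hm
    induction m with
    | zero => omega
    | succ n ih =>
      rcases Nat.lt_or_ge 1 (n + 1) with h | h
      · have hn : 1 ≤ n := by omega
        exact le_trans (ih hn) (hmono n hn)
      · have : n = 0 := by omega
        subst this; exact hτ1
  have hτpos : ∀ m, 1 ≤ m → 0 < τ m := fun m hm =>
    lt_of_lt_of_le (Real.exp_pos _) (hτge m hm)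
  have hlogge : ∀ m, 1 ≤ m → Real.exp 10 ≤ Real.log (τ m) := by
    intro m hm
    have := Real.log_le_log (Real.exp_pos _) (hτge m hm)
    rwa [Real.log_exp] at this
  have hlogpos : ∀ m, 1 ≤ m → 0 < Real.log (τ m) := fun m hm =>
    lt_of_lt_of_le (Real.exp_pos _) (hlogge m hm)
  -- lower bound on iterated log
  have hℓ : ∀ m, 1 ≤ m → 10 * 2 ^ (m - 1) ≤ Real.log (Real.log (τ m)) := by
    intro m hm
    induction m with
    | zero => omega
    | succ n ih =>
      rcases Nat.lt_or_ge 1 (n + 1) with h | h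
      · have hn : 1 ≤ n := by omega
        have h1 := ih hn
        have h2 := hC2 n hn
        have hexp : (2 : ℝ) ^ (n + 1 - 1) = 2 * 2 ^ (n - 1) := by
          rw [← pow_succ']
          congr 1
          omega
        rw [hexp]
        linarith
      · have : n = 0 := by omega
        subst this
        simp only [Nat.sub_self, pow_zero, mul_one]
        have := Real.log_le_log (Real.exp_pos _) (hlogge 1 le_rfl)
        rwa [Real.log_exp] at this
  set L := Real.log (τ k) with hL
  set ℓ := Real.log L with hℓdef
  set M := Real.log (Real.log (τ (k + 1))) with hM
  have hk1 : 1 ≤ k + 1 := by omega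
  have hMpos : 0 < M := by
    have := hℓ (k + 1) hk1
    have h2 : (0 : ℝ) < 10 * 2 ^ (k + 1 - 1) := by positivity
    linarith
  have hLpos : 0 < L := hlogpos k hk
  have hℓ10 : (10 : ℝ) * 2 ^ (k - 1) ≤ ℓ := hℓ k hk
  have hτkpos := hτpos k hk
  -- M ≤ L via C1
  have hMleL : M ≤ L := by
    have h1 := hC1 k hk
    have h2 : Real.log ((τ (k + 1)) ^ (11 : ℕ)) ≤ τ k ^ (α / 7) := by
      calc Real.log ((τ (k + 1)) ^ (11 : ℕ)) ≤ Real.log (Real.exp (τ k ^ (α / 7))) :=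
            Real.log_le_log (pow_pos (hτpos (k + 1) hk1) _) h1
        _ = τ k ^ (α / 7) := Real.log_exp _
    rw [Real.log_pow] at h2
    have hτk1 : (1 : ℝ) ≤ τ k := le_trans (Real.one_le_exp (le_of_lt (Real.exp_pos _))) (hτge k hk)
    have h3 : τ k ^ (α / 7) ≤ τ k := by
      calc τ k ^ (α / 7) ≤ τ k ^ (1 : ℝ) :=
            Real.rpow_le_rpow_of_exponent_le hτk1 (by linarith)
        _ = τ k := Real.rpow_one _
    have hlogk1pos := hlogpos (k + 1) hk1
    have h4 : Real.log (τ (k + 1)) ≤ τ k := by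
      have : (11 : ℝ) * Real.log (τ (k + 1)) ≤ τ k := by
        push_cast at h2; linarith
      linarith
    have := Real.log_le_log hlogk1pos h4
    rwa [← hL, ← hM] at this
  -- key numeric inequality : k * log 3 + 3 ℓ < exp ℓ
  have hklog : (k : ℝ) * Real.log 3 + 3 * ℓ < Real.exp ℓ := by
    have hlog3 : Real.log 3 ≤ 2 := by
      rw [Real.log_le_iff_le_exp (by norm_num)]
      have := Real.add_one_le_exp (2 : ℝ)
      linarith
    have hk2 : (k : ℝ) ≤ 2 ^ (k - 1) := by
      have : k - 1 < 2 ^ (k - 1) := (k - 1).lt_two_pow_self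
      have h' : k ≤ 2 ^ (k - 1) := by omega
      exact_mod_cast h'
    have hkℓ : (k : ℝ) * Real.log 3 ≤ ℓ / 5 := by
      have hknn : (0 : ℝ) ≤ (k : ℝ) := Nat.cast_nonneg _
      have h1 : (k : ℝ) * Real.log 3 ≤ (k : ℝ) * 2 := by
        have := Real.log_nonneg (by norm_num : (1:ℝ) ≤ 3)
        nlinarith
      nlinarith
    have hℓten : (10 : ℝ) ≤ ℓ := by
      have : (10 : ℝ) * 1 ≤ 10 * 2 ^ (k - 1) := by
        have : (1 : ℝ) ≤ 2 ^ (k - 1) := one_le_pow₀ (by norm_num)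
        linarith
      linarith
    have hhalf := Real.add_one_le_exp (ℓ / 2)
    have hsq : Real.exp (ℓ / 2) * Real.exp (ℓ / 2) = Real.exp ℓ := by
      rw [← Real.exp_add]; ring_nf
    nlinarith [Real.exp_pos (ℓ / 2)]
  -- assemble
  have hLexp : Real.exp ℓ = L := Real.exp_log hLpos
  have hτexp : Real.exp L = τ k := Real.exp_log hτkpos
  have hmain : (3 : ℝ) ^ k * L ^ 3 < τ k := by
    have h3k : (3 : ℝ) ^ k = Real.exp ((k : ℝ) * Real.log 3) := by
      rw [Real.exp_nat_mul, Real.exp_log (by norm_num : (0:ℝ) < 3)]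
    have hL3 : L ^ 3 = Real.exp (3 * ℓ) := by
      rw [← hLexp, ← Real.exp_nat_mul]
      norm_num
    rw [h3k, hL3, ← Real.exp_add, ← hτexp]
    exact Real.exp_lt_exp.mpr (by rw [← hLexp]; linarith)
  rw [div_mul_eq_mul_div, div_lt_div_iff₀ hτkpos hMpos, one_mul]
  have h1 : (3 : ℝ) ^ k * L ^ 2 * M ≤ (3 : ℝ) ^ k * L ^ 2 * L := by
    have : (0 : ℝ) ≤ (3 : ℝ) ^ k * L ^ 2 := by positivity
    exact mul_le_mul_of_nonneg_left hMleL this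
  calc (3 : ℝ) ^ k * L ^ 2 * M ≤ (3 : ℝ) ^ k * L ^ 2 * L := h1
    _ = (3 : ℝ) ^ k * L ^ 3 := by ring
    _ < τ k := hmain
end

section
/- Let η ∈ (0,1/4] and let u₁ : ℂ → ℝ be subharmonic with u₁(z) = e^{|z|/η} whenever |z| ≥ 1 + 7η/5. Define u : ℂ → ℝ by u(z) = u₁(z) for |z| < 1+2η; u(z) = max( u₁(z), (2e³/η)·e^{1/η}·log(|z|/(1+2η)) ) for 1+2η ≤ |z| ≤ 1+3η; and u(z) = (2e³/η)·e^{1/η}·log(|z|/(1+2η)) for |z| > 1+3η. Then u is subharmonic on ℂ. -/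
open Metric Real
open scoped Classical

theorem circle_avg_log (c : ℂ) (r : ℝ) (h0 : 0 < r) (hr : r < ‖c‖) :
    ∫ θ in (0:ℝ)..(2*π), Real.log (‖circleMap c r θ‖) = 2*π*Real.log (‖c‖) := by
  have hc : c ≠ 0 := by
    intro h; rw [h] at hr; simp at hr; linarith
  have hcpos : 0 < ‖c‖ := norm_pos_iff.mpr hc
  set f : ℂ → ℂ := fun w => Complex.log (w / c) with hf
  have hslit : ∀ w ∈ closedBall c r, w / c ∈ Complex.slitPlane := by
    intro w hw
    left
    have h1 : ‖w / c - 1‖ < 1 := by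
      rw [show w / c - 1 = (w - c) / c by field_simp]
      rw [norm_div, div_lt_one hcpos]
      calc ‖w - c‖ ≤ r := by
            simpa [Complex.dist_eq] using (mem_closedBall.mp hw)
        _ < ‖c‖ := hr
    have h2 : |(w / c).re - 1| < 1 := by
      calc |(w / c).re - 1| = |(w / c - 1).re| := by simp
        _ ≤ ‖w / c - 1‖ := Complex.abs_re_le_norm _
        _ < 1 := h1
    have := abs_lt.mp h2
    linarith [this.1]
  have hdiff : DifferentiableOn ℂ f (closedBall c r) := by
    intro w hw
    exact ((Complex.differentiableAt_log (hslit w hw)).comp w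
      ((differentiableAt_id.div_const c))).differentiableWithinAt
  have hcauchy := hdiff.circleIntegral_sub_inv_smul (mem_ball_self h0)
  have hfc : f c = 0 := by simp [hf, div_self hc]
  rw [hfc, smul_zero] at hcauchy
  have key : ∫ θ in (0:ℝ)..(2*π), f (circleMap c r θ) = 0 := by
    have heq : (∮ z in C(c, r), (z - c)⁻¹ • f z)
        = ∫ θ in (0:ℝ)..(2*π), Complex.I • f (circleMap c r θ) := by
      rw [circleIntegral]
      refine intervalIntegral.integral_congr fun θ _ => ?_
      rw [deriv_circleMap, circleMap_sub_center, smul_smul]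
      congr 1
      have hne : circleMap 0 r θ ≠ 0 := by
        intro h
        have := norm_circleMap_zero r θ
        rw [h] at this
        simp at this
        rw [abs_of_pos h0] at this
        linarith
      field_simp
    rw [heq, intervalIntegral.integral_smul] at hcauchy
    simpa [Complex.I_ne_zero] using hcauchy
  have hmemball : ∀ θ : ℝ, circleMap c r θ ∈ closedBall c r := fun θ => by
    simpa [Complex.dist_eq, circleMap_sub_center, abs_of_pos h0] using
      (le_of_eq (norm_circleMap_zero r θ)).trans (le_of_eq (abs_of_pos h0))
  have hcont : ContinuousOn (fun θ => f (circleMap c r θ)) (Set.uIcc 0 (2*π)) := by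
    intro θ _
    refine ContinuousAt.continuousWithinAt ?_
    refine (continuousAt_clog ?_).comp ?_
    · exact hslit _ (hmemball θ)
    · exact ((continuous_circleMap c r).continuousAt).div_const c
  have hint : IntervalIntegrable (fun θ => f (circleMap c r θ)) MeasureTheory.volume 0 (2*π) :=
    hcont.intervalIntegrable
  have hre : ∫ θ in (0:ℝ)..(2*π), (f (circleMap c r θ)).re = 0 := by
    have := Complex.reCLM.intervalIntegral_comp_comm hint
    simp only [Complex.reCLM_apply] at this
    rw [this, key]
    simp
  have hnz : ∀ θ : ℝ, ‖circleMap c r θ‖ ≠ 0 := by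
    intro θ
    have h1 : ‖c‖ - ‖circleMap c r θ‖ ≤ r := by
      have : ‖c‖ - ‖circleMap c r θ‖ ≤ ‖c - circleMap c r θ‖ := by
        simpa using norm_sub_norm_le c (circleMap c r θ)
      have h2 : ‖c - circleMap c r θ‖ = r := by
        rw [show c - circleMap c r θ = -(circleMap c r θ - c) by ring, norm_neg,
          circleMap_sub_center, norm_circleMap_zero, abs_of_pos h0]
      linarith
    intro h; rw [h] at h1; linarith
  have habs : ∀ θ : ℝ, Real.log (‖circleMap c r θ‖)
      = (f (circleMap c r θ)).re + Real.log (‖c‖) := by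
    intro θ
    rw [hf]
    simp only [Complex.log_re, norm_div]
    rw [Real.log_div (hnz θ) (ne_of_gt hcpos)]
    ring
  calc ∫ θ in (0:ℝ)..(2*π), Real.log (‖circleMap c r θ‖)
      = ∫ θ in (0:ℝ)..(2*π), ((f (circleMap c r θ)).re + Real.log (‖c‖)) :=
        intervalIntegral.integral_congr fun θ _ => habs θ
    _ = (∫ θ in (0:ℝ)..(2*π), (f (circleMap c r θ)).re)
        + ∫ θ in (0:ℝ)..(2*π), Real.log (‖c‖) := by
        apply intervalIntegral.integral_add
        · exact (Complex.continuous_re.comp_continuousOn hcont).intervalIntegrable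
        · exact intervalIntegrable_const
    _ = 2*π*Real.log (‖c‖) := by
        rw [hre, intervalIntegral.integral_const, sub_zero, smul_eq_mul, zero_add]


lemma circleMap_abs_sub (c : ℂ) (r : ℝ) (hr : 0 ≤ r) (θ : ℝ) :
    ‖circleMap c r θ - c‖ = r := by
  rw [circleMap_sub_center, norm_circleMap_zero, abs_of_nonneg hr]

lemma circleMap_abs_le (c : ℂ) (r : ℝ) (hr : 0 ≤ r) (θ : ℝ) :
    ‖circleMap c r θ‖ ≤ ‖c‖ + r := by
  have h1 := circleMap_abs_sub c r hr θ
  have h2 := norm_add_le c (circleMap c r θ - c)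
  have h3 : c + (circleMap c r θ - c) = circleMap c r θ := by ring
  rw [h3, h1] at h2
  exact h2

lemma circleMap_abs_ge (c : ℂ) (r : ℝ) (hr : 0 ≤ r) (θ : ℝ) :
    ‖c‖ - r ≤ ‖circleMap c r θ‖ := by
  have h1 := circleMap_abs_sub c r hr θ
  have h2 := norm_add_le (circleMap c r θ) (c - circleMap c r θ)
  rw [norm_sub_rev c (circleMap c r θ)] at h2
  have h3 : circleMap c r θ + (c - circleMap c r θ) = c := by ring
  rw [h3, h1] at h2
  linarith

lemma circleMap_abs_pos (c : ℂ) (r : ℝ) (h0 : 0 ≤ r) (hr : r < ‖c‖) (θ : ℝ) :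
    0 < ‖circleMap c r θ‖ := by
  have := circleMap_abs_ge c r h0 θ
  linarith

lemma intervalIntegrable_log_abs_circleMap (c : ℂ) (r : ℝ) (h0 : 0 ≤ r)
    (hr : r < ‖c‖) :
    IntervalIntegrable (fun θ => Real.log (‖circleMap c r θ‖))
      MeasureTheory.volume 0 (2*π) := by
  apply ContinuousOn.intervalIntegrable
  intro θ _
  apply ContinuousAt.continuousWithinAt
  have h1 : ContinuousAt (fun θ : ℝ => ‖circleMap c r θ‖) θ :=
    (continuous_norm.comp (continuous_circleMap c r)).continuousAt
  exact (Real.continuousAt_log (ne_of_gt (circleMap_abs_pos c r h0 hr θ))).tendsto.comp h1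

theorem circle_avg_logdiv (K a : ℝ) (ha : 0 < a) (c : ℂ) (r : ℝ) (h0 : 0 < r)
    (hr : r < ‖c‖) :
    ∫ θ in (0:ℝ)..(2*π), K * Real.log (‖circleMap c r θ‖ / a)
      = 2*π*(K * Real.log (‖c‖ / a)) := by
  have hnz : ∀ θ : ℝ, ‖circleMap c r θ‖ ≠ 0 :=
    fun θ => ne_of_gt (circleMap_abs_pos c r h0.le hr θ)
  have hcpos : 0 < ‖c‖ := lt_trans h0 hr
  have heq : ∀ θ : ℝ, K * Real.log (‖circleMap c r θ‖ / a)
      = K * Real.log (‖circleMap c r θ‖) - K * Real.log a := by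
    intro θ
    rw [Real.log_div (hnz θ) (ne_of_gt ha)]
    ring
  rw [intervalIntegral.integral_congr (fun θ _ => heq θ)]
  rw [intervalIntegral.integral_sub
    ((intervalIntegrable_log_abs_circleMap c r h0.le hr).const_mul K)
    intervalIntegrable_const]
  rw [intervalIntegral.integral_const_mul, circle_avg_log c r h0 hr,
    intervalIntegral.integral_const]
  rw [Real.log_div (ne_of_gt hcpos) (ne_of_gt ha)]
  simp
  ring

lemma my_log_lower (x : ℝ) (hx : 0 < x) : x / (1+x) ≤ Real.log (1+x) := by
  have h := Real.log_le_sub_one_of_pos (show (0:ℝ) < (1+x)⁻¹ by positivity)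
  rw [Real.log_inv] at h
  have he : 1 - (1+x)⁻¹ = x/(1+x) := by
    have hx1 : (1+x) ≠ 0 := by positivity
    rw [eq_div_iff hx1, sub_mul, inv_mul_cancel₀ hx1]; ring
  linarith [he ▸ (by linarith : 1 - (1+x)⁻¹ ≤ Real.log (1+x))]

lemma my_exp_upper : Real.exp (1/8 : ℝ) ≤ 8/7 := by
  have h := Real.add_one_le_exp (-(1/8) : ℝ)
  rw [Real.exp_neg] at h
  have hp := Real.exp_pos (1/8 : ℝ)
  have h2 := mul_le_mul_of_nonneg_left h hp.le
  rw [mul_inv_cancel₀ (ne_of_gt hp)] at h2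
  nlinarith

lemma F2bound (η : ℝ) (h0 : 0 < η) (h4 : η ≤ 1/4) (t : ℝ) (h1 : 1+3*η ≤ t)
    (h2 : t ≤ 1+3*η+η/8) :
    Real.exp (t/η) ≤ (2*Real.exp 3/η) * Real.exp (1/η) * Real.log (t/(1+2*η)) := by
  have h2η : (0:ℝ) < 1+2*η := by linarith
  have h3η : (0:ℝ) < 1+3*η := by linarith
  set E3 := Real.exp 3 with hE3
  set E := Real.exp (1/η) with hE
  have hE3p : 0 < E3 := Real.exp_pos _
  have hEp : 0 < E := Real.exp_pos _
  have hx : (1+3*η)/(1+2*η) = 1 + η/(1+2*η) := by field_simp; ring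
  have hlog1 : η/(1+3*η) ≤ Real.log ((1+3*η)/(1+2*η)) := by
    rw [hx]
    have hll := my_log_lower (η/(1+2*η)) (by positivity)
    have hxx : (η/(1+2*η))/(1+η/(1+2*η)) = η/(1+3*η) := by
      field_simp
      ring
    rw [hxx] at hll
    exact hll
  have hlog2 : Real.log ((1+3*η)/(1+2*η)) ≤ Real.log (t/(1+2*η)) := by
    apply (Real.log_le_log_iff (div_pos h3η h2η) (div_pos (by linarith) h2η)).mpr
    gcongr
  calc Real.exp (t/η)
      ≤ E * E3 * Real.exp (1/8) := by
        rw [← Real.exp_add, ← Real.exp_add]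
        apply Real.exp_le_exp.mpr
        rw [div_le_iff₀ h0]
        have hinv : 1/η*η = 1 := by field_simp
        nlinarith
    _ ≤ E * E3 * (8/7) := by
        exact mul_le_mul_of_nonneg_left my_exp_upper (by positivity)
    _ ≤ E * E3 * (2/(1+3*η)) := by
        apply mul_le_mul_of_nonneg_left _ (by positivity)
        rw [div_le_div_iff₀ (by norm_num) h3η]
        linarith
    _ = (2*E3/η) * E * (η/(1+3*η)) := by field_simp
    _ ≤ (2*E3/η) * E * Real.log ((1+3*η)/(1+2*η)) := by
        exact mul_le_mul_of_nonneg_left hlog1 (by positivity)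
    _ ≤ (2*E3/η) * E * Real.log (t/(1+2*η)) := by
        exact mul_le_mul_of_nonneg_left hlog2 (by positivity)

lemma F5bound (η : ℝ) (h0 : 0 < η) (h4 : η ≤ 1/4) (t : ℝ) (h1 : 1+2*η ≤ t)
    (h2 : t ≤ 1+2*η+η/6) :
    (2*Real.exp 3/η) * Real.exp (1/η) * Real.log (t/(1+2*η)) ≤ Real.exp (t/η) := by
  have h2η : (0:ℝ) < 1+2*η := by linarith
  have htp : (0:ℝ) < t := by linarith
  set E := Real.exp (1/η) with hE
  have hEp : 0 < E := Real.exp_pos _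
  have hlog : Real.log (t/(1+2*η)) ≤ η/6 := by
    have := Real.log_le_sub_one_of_pos (show (0:ℝ) < t/(1+2*η) by positivity)
    have hd : t/(1+2*η) - 1 ≤ η/6 := by
      rw [div_sub_one (ne_of_gt h2η), div_le_iff₀ h2η]
      nlinarith
    linarith
  have he1 : Real.exp 1 ≤ 3 := by
    have := Real.exp_one_lt_d9; linarith
  calc (2*Real.exp 3/η) * E * Real.log (t/(1+2*η))
      ≤ (2*Real.exp 3/η) * E * (η/6) := by
        apply mul_le_mul_of_nonneg_left hlog (by positivity)
    _ = Real.exp 3 * E / 3 := by field_simp; ring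
    _ ≤ Real.exp 2 * E := by
        have h3 : Real.exp 3 = Real.exp 2 * Real.exp 1 := by
          rw [← Real.exp_add]; norm_num
        rw [h3]
        nlinarith [mul_pos (Real.exp_pos (2:ℝ)) hEp]
    _ = Real.exp ((1+2*η)/η) := by
        rw [← Real.exp_add]
        congr 1
        field_simp
        ring
    _ ≤ Real.exp (t/η) := Real.exp_le_exp.mpr (by gcongr)


/-- A function `u : ℂ → ℝ` is subharmonic on an open set `Ω` if it is upper semicontinuous
on `Ω` and satisfies the sub-mean value inequality on small circles around each point. -/
def SubharmonicOn (u : ℂ → ℝ) (Ω : Set ℂ) : Prop :=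
  UpperSemicontinuousOn u Ω ∧
  ∀ z ∈ Ω, ∃ r₀ : ℝ, 0 < r₀ ∧ ∀ r : ℝ, 0 < r → r < r₀ → closedBall z r ⊆ Ω →
    u z ≤ (1 / (2 * Real.pi)) *
      ∫ θ in (0 : ℝ)..(2 * Real.pi), u (z + (r : ℂ) * Complex.exp ((θ : ℂ) * Complex.I))

/-- The gluing step in the construction of the subharmonic weight in the proof of
Lemma 3.1: the exponential weight `u₁` (equal to `e^{|z|/η}` for `|z| ≥ 1 + 7η/5`) glued
with the logarithmic weight `(2e³/η)e^{1/η} log(|z|/(1+2η))` across the annulus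
`1+2η ≤ |z| ≤ 1+3η` is subharmonic on `ℂ`. -/
theorem glued_weight_subharmonic
    (η : ℝ) (hη : η ∈ Set.Ioc (0 : ℝ) (1 / 4))
    (u₁ : ℂ → ℝ) (hsub : SubharmonicOn u₁ Set.univ)
    (hu₁ : ∀ z : ℂ, 1 + 7 * η / 5 ≤ ‖z‖ →
      u₁ z = Real.exp (‖z‖ / η)) :
    SubharmonicOn
      (fun z =>
        if ‖z‖ < 1 + 2 * η then u₁ z
        else if ‖z‖ ≤ 1 + 3 * η then
          max (u₁ z)
            ((2 * Real.exp 3 / η) * Real.exp (1 / η) *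
              Real.log (‖z‖ / (1 + 2 * η)))
        else
          (2 * Real.exp 3 / η) * Real.exp (1 / η) *
            Real.log (‖z‖ / (1 + 2 * η)))
      Set.univ := by
  obtain ⟨hη0, hη4⟩ := hη
  obtain ⟨husc₁, hmean₁⟩ := hsub
  have hπ : (0:ℝ) < π := Real.pi_pos
  set u : ℂ → ℝ := fun z =>
        if ‖z‖ < 1 + 2 * η then u₁ z
        else if ‖z‖ ≤ 1 + 3 * η then
          max (u₁ z)
            ((2 * Real.exp 3 / η) * Real.exp (1 / η) *
              Real.log (‖z‖ / (1 + 2 * η)))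
        else
          (2 * Real.exp 3 / η) * Real.exp (1 / η) *
            Real.log (‖z‖ / (1 + 2 * η)) with hu
  set G : ℂ → ℝ := fun w =>
    2 * Real.exp 3 / η * Real.exp (1 / η) * Real.log (‖w‖ / (1 + 2 * η)) with hG
  have husc₁' : UpperSemicontinuous u₁ := upperSemicontinuousOn_univ_iff.mp husc₁
  have hCpos : 0 < 2 * Real.exp 3 / η * Real.exp (1 / η) :=
    mul_pos (div_pos (by positivity) hη0) (Real.exp_pos _)
  -- basic facts
  have h2η : (0:ℝ) < 1 + 2*η := by linarith
  have hGcont : ∀ w : ℂ, w ≠ 0 → ContinuousAt G w := by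
    intro w hw
    have habs : ContinuousAt (fun v : ℂ => ‖v‖ / (1 + 2*η)) w :=
      (continuous_norm.continuousAt).div_const _
    have hlog : ContinuousAt (fun v : ℂ => Real.log (‖v‖ / (1 + 2*η))) w := by
      have hne : ‖w‖ / (1 + 2*η) ≠ 0 := by
        have : 0 < ‖w‖ := norm_pos_iff.mpr hw
        positivity
      exact (Real.continuousAt_log hne).tendsto.comp habs
    exact continuousAt_const.mul hlog
  have hGnonneg : ∀ w : ℂ, 1 + 2*η ≤ ‖w‖ → 0 ≤ G w := by
    intro w hw
    apply mul_nonneg hCpos.le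
    apply Real.log_nonneg
    rw [le_div_iff₀ h2η]
    linarith
  have hGmono : ∀ w : ℂ, ∀ t : ℝ, 0 < ‖w‖ → ‖w‖ ≤ t →
      G w ≤ 2 * Real.exp 3 / η * Real.exp (1 / η) * Real.log (t / (1 + 2*η)) := by
    intro w t h1 h2
    apply mul_le_mul_of_nonneg_left _ hCpos.le
    apply (Real.log_le_log_iff (div_pos h1 h2η) (div_pos (lt_of_lt_of_le h1 h2) h2η)).mpr
    gcongr
  -- u agrees with u₁ near the inner region
  have h_inner : ∀ w : ℂ, ‖w‖ < 1 + 2*η + η/6 → u w = u₁ w := by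
    intro w hw
    by_cases h1 : ‖w‖ < 1 + 2*η
    · simp only [hu]; rw [if_pos h1]
    · push_neg at h1
      have h2 : ‖w‖ ≤ 1 + 3*η := by linarith
      have h75 : 1 + 7*η/5 ≤ ‖w‖ := by linarith
      have hle := F5bound η hη0 hη4 (‖w‖) h1 (by linarith)
      simp only [hu]
      rw [if_neg (not_lt.mpr h1), if_pos h2, max_eq_left]
      rw [hu₁ w h75]
      exact hle
  -- u dominates u₁ up to 1+3η+η/8
  have h_ge_u₁ : ∀ w : ℂ, ‖w‖ ≤ 1 + 3*η + η/8 → u₁ w ≤ u w := by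
    intro w hw
    simp only [hu]
    split_ifs with h1 h2
    · exact le_refl _
    · exact le_max_left _ _
    · push_neg at h1 h2
      rw [hu₁ w (by linarith)]
      exact F2bound η hη0 hη4 _ h2.le hw
  -- u dominates G outside the inner disk
  have h_ge_G : ∀ w : ℂ, 1 + 2*η ≤ ‖w‖ → G w ≤ u w := by
    intro w hw
    simp only [hu]
    split_ifs with h1 h2
    · exact absurd h1 (not_lt.mpr hw)
    · exact le_max_right _ _
    · exact le_refl _
  -- bounds for u outside the inner disk
  have h_bound : ∀ w : ℂ, 1 + 2*η ≤ ‖w‖ →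
      0 ≤ u w ∧ u w ≤ Real.exp (‖w‖ / η) + G w := by
    intro w hw
    have h75 : 1 + 7*η/5 ≤ ‖w‖ := by linarith
    have hGn := hGnonneg w hw
    have hEp : 0 < Real.exp (‖w‖ / η) := Real.exp_pos _
    simp only [hu]
    split_ifs with h1 h2
    · exact absurd h1 (not_lt.mpr hw)
    · rw [hu₁ w h75,
        show (2 * Real.exp 3 / η * Real.exp (1 / η) * Real.log (‖w‖ / (1 + 2 * η)))
          = G w from rfl]
      constructor
      · exact le_trans hEp.le (le_max_left _ _)
      · apply max_le <;> [linarith; linarith]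
    · rw [show (2 * Real.exp 3 / η * Real.exp (1 / η) * Real.log (‖w‖ / (1 + 2 * η)))
          = G w from rfl]
      exact ⟨hGn, by linarith⟩
  -- measurability of u
  have hmu₁ : Measurable u₁ := husc₁'.measurable
  have hmG : Measurable G :=
    measurable_const.mul (Real.measurable_log.comp ((continuous_norm.measurable).div_const _))
  have hmu : Measurable u := by
    rw [hu]
    refine Measurable.ite (measurableSet_lt continuous_norm.measurable measurable_const)
      hmu₁ ?_
    exact Measurable.ite (measurableSet_le continuous_norm.measurable measurable_const)
      (hmu₁.max hmG) hmG
  -- integrability of u on circles away from origin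
  have hIntU : ∀ (z : ℂ) (r : ℝ), 0 < r →
      (∀ θ : ℝ, 1 + 2*η ≤ ‖circleMap z r θ‖) →
      IntervalIntegrable (fun θ => u (circleMap z r θ)) MeasureTheory.volume 0 (2*π) := by
    intro z r hr hcirc
    set M : ℝ := Real.exp ((‖z‖ + r) / η)
      + 2 * Real.exp 3 / η * Real.exp (1 / η) * Real.log ((‖z‖ + r) / (1 + 2*η))
      with hM
    apply IntervalIntegrable.mono_fun' (g := fun _ => M) intervalIntegrable_const
    · exact (hmu.comp (continuous_circleMap z r).measurable).aestronglyMeasurable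
    · apply Filter.Eventually.of_forall
      intro θ
      have hw := hcirc θ
      have hwle := circleMap_abs_le z r hr.le θ
      have hwpos : 0 < ‖circleMap z r θ‖ := by linarith
      obtain ⟨hl, hb⟩ := h_bound (circleMap z r θ) hw
      have h1 : Real.exp (‖circleMap z r θ‖ / η)
          ≤ Real.exp ((‖z‖ + r) / η) := by
        apply Real.exp_le_exp.mpr; gcongr
      have h2 := hGmono (circleMap z r θ) (‖z‖ + r) hwpos hwle
      simp only [Real.norm_eq_abs, abs_of_nonneg hl]
      rw [hM]
      linarith
  -- key inequality: the G-mean bound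
  have key_G : ∀ (z : ℂ) (r : ℝ), 0 < r → r < ‖z‖ →
      (∀ θ : ℝ, 1 + 2*η ≤ ‖circleMap z r θ‖) →
      G z ≤ 1/(2*π) * ∫ θ in (0:ℝ)..(2*π), u (circleMap z r θ) := by
    intro z r hr hrz hcirc
    have havg := circle_avg_logdiv (2 * Real.exp 3 / η * Real.exp (1 / η)) (1+2*η) h2η
      z r hr hrz
    have hIg : IntervalIntegrable
        (fun θ => 2 * Real.exp 3 / η * Real.exp (1 / η)
          * Real.log (‖circleMap z r θ‖ / (1+2*η)))
        MeasureTheory.volume 0 (2*π) := by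
      apply IntervalIntegrable.const_mul
      have hlogint := intervalIntegrable_log_abs_circleMap z r hr.le hrz
      have heq : ∀ θ : ℝ, Real.log (‖circleMap z r θ‖ / (1+2*η))
          = Real.log (‖circleMap z r θ‖) - Real.log (1+2*η) := by
        intro θ
        exact Real.log_div (ne_of_gt (circleMap_abs_pos z r hr.le hrz θ)) (ne_of_gt h2η)
      rw [show (fun θ => Real.log (‖circleMap z r θ‖ / (1+2*η)))
          = fun θ => Real.log (‖circleMap z r θ‖) - Real.log (1+2*η)
          from funext heq]
      exact hlogint.sub intervalIntegrable_const
    have hIu := hIntU z r hr hcirc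
    have hmono := intervalIntegral.integral_mono_on (by linarith : (0:ℝ) ≤ 2*π) hIg hIu
      (fun θ _ => h_ge_G (circleMap z r θ) (hcirc θ))
    rw [havg] at hmono
    have := mul_le_mul_of_nonneg_left hmono (by positivity : (0:ℝ) ≤ 1/(2*π))
    calc G z = 1/(2*π) * (2*π*(G z)) := by field_simp
      _ ≤ 1/(2*π) * ∫ θ in (0:ℝ)..(2*π), u (circleMap z r θ) := this
  constructor
  · -- upper semicontinuity
    rw [upperSemicontinuousOn_univ_iff]
    intro z
    rcases lt_or_ge (‖z‖) (1 + 2*η + η/6) with hA | hB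
    · intro y hy
      rw [h_inner z hA] at hy
      have h1 : ∀ᶠ w in nhds z, u₁ w < y := husc₁' z y hy
      have h2 : ∀ᶠ w in nhds z, ‖w‖ < 1 + 2*η + η/6 :=
        (isOpen_lt continuous_norm continuous_const).eventually_mem hA
      filter_upwards [h1, h2] with w hw1 hw2
      rw [h_inner w hw2]
      exact hw1
    · have hz0 : z ≠ 0 := by
        intro h; rw [h] at hB; simp at hB; linarith
      rcases lt_or_ge (‖z‖) (1 + 3*η + η/8) with hB1 | hB2
      · -- on the open annulus u = max u₁ G
        have hmaxeq : ∀ w : ℂ, 1 + 2*η < ‖w‖ → ‖w‖ < 1 + 3*η + η/8 →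
            u w = max (u₁ w) (G w) := by
          intro w hw1 hw2
          simp only [hu]
          rw [if_neg (not_lt.mpr hw1.le)]
          by_cases h2 : ‖w‖ ≤ 1 + 3*η
          · rw [if_pos h2]
          · push_neg at h2
            rw [if_neg (not_le.mpr h2), max_eq_right]
            rw [hu₁ w (by linarith)]
            exact F2bound η hη0 hη4 _ h2.le hw2.le
        intro y hy
        rw [hmaxeq z (by linarith) hB1] at hy
        rw [max_lt_iff] at hy
        have h1 : ∀ᶠ w in nhds z, u₁ w < y := husc₁' z y hy.1
        have h2 : ∀ᶠ w in nhds z, G w < y :=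
          ((hGcont z hz0).tendsto).eventually_lt_const hy.2
        have h3 : ∀ᶠ w in nhds z, 1 + 2*η < ‖w‖ ∧ ‖w‖ < 1 + 3*η + η/8 := by
          have ho : IsOpen {w : ℂ | 1 + 2*η < ‖w‖ ∧ ‖w‖ < 1 + 3*η + η/8} :=
            (isOpen_lt continuous_const continuous_norm).inter
              (isOpen_lt continuous_norm continuous_const)
          exact ho.eventually_mem ⟨by linarith, hB1⟩
        filter_upwards [h1, h2, h3] with w hw1 hw2 hw3
        rw [hmaxeq w hw3.1 hw3.2]
        exact max_lt hw1 hw2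
      · -- outer region: u = G on the open set |w| > 1+3η
        have hGeq : ∀ w : ℂ, 1 + 3*η < ‖w‖ → u w = G w := by
          intro w hw
          simp only [hu]
          rw [if_neg (not_lt.mpr (by linarith)), if_neg (not_le.mpr hw)]
        intro y hy
        rw [hGeq z (by linarith)] at hy
        have h2 : ∀ᶠ w in nhds z, G w < y :=
          ((hGcont z hz0).tendsto).eventually_lt_const hy
        have h3 : ∀ᶠ w in nhds z, 1 + 3*η < ‖w‖ :=
          (isOpen_lt continuous_const continuous_norm).eventually_mem (by
            show (1:ℝ) + 3*η < ‖z‖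
            linarith)
        filter_upwards [h2, h3] with w hw2 hw3
        rw [hGeq w hw3]
        exact hw2
  · -- sub-mean value property
    intro z _
    have hcm : ∀ θ : ℝ, z + (↑(0:ℝ) : ℂ) = z := fun _ => by simp
    rcases lt_or_ge (‖z‖) (1 + 2*η + η/6) with hA | hB
    · -- inner case
      obtain ⟨r₁, hr₁, hm₁⟩ := hmean₁ z (Set.mem_univ z)
      refine ⟨min r₁ (1 + 2*η + η/6 - ‖z‖), lt_min hr₁ (by linarith), ?_⟩
      intro r hr hrlt _
      have hrr₁ : r < r₁ := lt_of_lt_of_le hrlt (min_le_left _ _)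
      have hrd : r < 1 + 2*η + η/6 - ‖z‖ :=
        lt_of_lt_of_le hrlt (min_le_right _ _)
      have hcme : ∀ θ : ℝ, z + (r : ℂ) * Complex.exp ((θ : ℂ) * Complex.I) = circleMap z r θ :=
        fun θ => rfl
      simp only [hcme]
      have hmz := hm₁ r hr hrr₁ (Set.subset_univ _)
      simp only [hcme] at hmz
      have hcirceq : ∀ θ : ℝ, u (circleMap z r θ) = u₁ (circleMap z r θ) := by
        intro θ
        apply h_inner
        have := circleMap_abs_le z r hr.le θ
        linarith
      rw [intervalIntegral.integral_congr (fun θ _ => hcirceq θ)]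
      rw [h_inner z (by linarith)]
      exact hmz
    · rcases le_or_gt (‖z‖) (1 + 3*η) with hB1 | hB2
      · -- annulus case
        obtain ⟨r₁, hr₁, hm₁⟩ := hmean₁ z (Set.mem_univ z)
        refine ⟨min r₁ (η/8), lt_min hr₁ (by linarith), ?_⟩
        intro r hr hrlt _
        have hrr₁ : r < r₁ := lt_of_lt_of_le hrlt (min_le_left _ _)
        have hrd : r < η/8 := lt_of_lt_of_le hrlt (min_le_right _ _)
        have hcme : ∀ θ : ℝ, z + (r : ℂ) * Complex.exp ((θ : ℂ) * Complex.I) = circleMap z r θ :=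
          fun θ => rfl
        simp only [hcme]
        have hmz := hm₁ r hr hrr₁ (Set.subset_univ _)
        simp only [hcme] at hmz
        have hcirc : ∀ θ : ℝ, 1 + 2*η ≤ ‖circleMap z r θ‖ := by
          intro θ
          have := circleMap_abs_ge z r hr.le θ
          linarith
        have hcirc75 : ∀ θ : ℝ, 1 + 7*η/5 ≤ ‖circleMap z r θ‖ := by
          intro θ
          have := hcirc θ
          linarith
        have hcircUp : ∀ θ : ℝ, ‖circleMap z r θ‖ ≤ 1 + 3*η + η/8 := by
          intro θ
          have := circleMap_abs_le z r hr.le θ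
          linarith
        have hrz : r < ‖z‖ := by linarith
        have huz : u z = max (u₁ z) (G z) := by
          simp only [hu]
          rw [if_neg (not_lt.mpr (by linarith)), if_pos hB1]
        rw [huz]
        apply max_le
        · -- u₁ z part
          have hIu₁ : IntervalIntegrable (fun θ => u₁ (circleMap z r θ))
              MeasureTheory.volume 0 (2*π) := by
            have heq : (fun θ : ℝ => u₁ (circleMap z r θ))
                = fun θ : ℝ => Real.exp (‖circleMap z r θ‖ / η) :=
              funext fun θ => hu₁ _ (hcirc75 θ)
            rw [heq]
            apply ContinuousOn.intervalIntegrable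
            apply Continuous.continuousOn
            exact Real.continuous_exp.comp
              ((continuous_norm.comp (continuous_circleMap z r)).div_const _)
          have hIu := hIntU z r hr hcirc
          have hmono := intervalIntegral.integral_mono_on (by linarith : (0:ℝ) ≤ 2*π)
            hIu₁ hIu (fun θ _ => h_ge_u₁ (circleMap z r θ) (hcircUp θ))
          calc u₁ z ≤ 1/(2*π) * ∫ θ in (0:ℝ)..(2*π), u₁ (circleMap z r θ) := hmz
            _ ≤ 1/(2*π) * ∫ θ in (0:ℝ)..(2*π), u (circleMap z r θ) :=
                mul_le_mul_of_nonneg_left hmono (by positivity)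
        · exact key_G z r hr hrz hcirc
      · -- outer case
        refine ⟨‖z‖ - (1 + 2*η), by linarith, ?_⟩
        intro r hr hrlt _
        have hcme : ∀ θ : ℝ, z + (r : ℂ) * Complex.exp ((θ : ℂ) * Complex.I) = circleMap z r θ :=
          fun θ => rfl
        simp only [hcme]
        have hcirc : ∀ θ : ℝ, 1 + 2*η ≤ ‖circleMap z r θ‖ := by
          intro θ
          have := circleMap_abs_ge z r hr.le θ
          linarith
        have hrz : r < ‖z‖ := by linarith
        have huz : u z = G z := by
          simp only [hu]
          rw [if_neg (not_lt.mpr (by linarith)), if_neg (not_le.mpr hB2)]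
        rw [huz]
        exact key_G z r hr hrz hcirc
end
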